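/- If G₁ and G₂ are graphs with matchings M₁ ⊆ E(G₁) and M₂ ⊆ E(G₂), and V₁, V₂ denote the sets of endvertices of the edges of M₁ and M₂ respectively, then every decycling set S of G₁ □ G₂ satisfies |S| ≥ |M₁|·|M₂|; indeed for each pair of edges e₁ ∈ M₁, e₂ ∈ M₂, the four vertices (endpoints of e₁) × (endpoints of e₂) induce a 4-cycle in G₁ □ G₂, and these 4-cycles are pairwise vertex-disjoint. -/

import Mathlib

open SimpleGraph

/-- The star `S_m = K_{1,m-1}` on `m` vertices, with center the vertex `0`. -/
def starGraph (m : ℕ) : SimpleGraph (Fin m) where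
  Adj i j := i ≠ j ∧ (i.val = 0 ∨ j.val = 0)
  symm := ⟨fun _ _ h => ⟨h.1.symm, h.2.symm⟩⟩
  loopless := ⟨fun _ h => h.1 rfl⟩

/-- The decycling number: the minimum size of a set of vertices whose removal
leaves an acyclic graph. -/
noncomputable def decyclingNumber {V : Type*} [Fintype V] (G : SimpleGraph V) : ℕ :=
  sInf {k | ∃ S : Finset V, S.card = k ∧ (G.induce ((↑S : Set V)ᶜ)).IsAcyclic}

/-- The forest number: the maximum size of a set of vertices inducing a forest. -/
noncomputable def forestNumber {V : Type*} [Fintype V] (G : SimpleGraph V) : ℕ :=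
  sSup {k | ∃ S : Finset V, S.card = k ∧ (G.induce (↑S : Set V)).IsAcyclic}

/-- The matching number: the maximum size of a set of pairwise non-incident edges. -/
noncomputable def matchingNumber {V : Type*} [Fintype V] (G : SimpleGraph V) : ℕ :=
  sSup {k | ∃ M : Finset (Sym2 V), ↑M ⊆ G.edgeSet ∧
    (M : Set (Sym2 V)).Pairwise (fun e f => ∀ v, ¬(v ∈ e ∧ v ∈ f)) ∧ M.card = k}

lemma quad_iso {V₁ V₂ : Type*} (G₁ : SimpleGraph V₁) (G₂ : SimpleGraph V₂)
    {a b : V₁} {c d : V₂} (hab : G₁.Adj a b) (hcd : G₂.Adj c d) :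
    Nonempty (((G₁.boxProd G₂).induce
      {p : V₁ × V₂ | p.1 ∈ (s(a,b) : Sym2 V₁) ∧ p.2 ∈ (s(c,d) : Sym2 V₂)}) ≃g cycleGraph 4) := by
  classical
  have hab' := hab.ne
  have hcd' := hcd.ne
  set Q : Set (V₁ × V₂) := {p : V₁ × V₂ | p.1 ∈ (s(a,b) : Sym2 V₁) ∧ p.2 ∈ (s(c,d) : Sym2 V₂)}
  let f : Fin 4 → Q := ![⟨(a,c), by simp [Q]⟩, ⟨(b,c), by simp [Q]⟩,
    ⟨(b,d), by simp [Q]⟩, ⟨(a,d), by simp [Q]⟩]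
  have hinj : Function.Injective f := by
    intro i j h
    fin_cases i <;> fin_cases j <;>
      simp_all [f, Subtype.ext_iff, Prod.ext_iff]
  have hsurj : Function.Surjective f := by
    rintro ⟨⟨x, y⟩, hx, hy⟩
    simp only [Sym2.mem_iff] at hx hy
    rcases hx with rfl | rfl <;> rcases hy with rfl | rfl
    · exact ⟨0, rfl⟩
    · exact ⟨3, rfl⟩
    · exact ⟨1, rfl⟩
    · exact ⟨2, rfl⟩
  refine ⟨(RelIso.mk (Equiv.ofBijective f ⟨hinj, hsurj⟩) ?_).symm⟩
  intro i j
  fin_cases i <;> fin_cases j <;>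
    simp [f, Equiv.ofBijective, comap_adj, boxProd_adj, hab, hcd, hab.symm, hcd.symm,
      hab', hcd', hab'.symm, hcd'.symm, cycleGraph_adj] <;> decide

lemma cycleGraph_four_not_acyclic : ¬ (cycleGraph 4).IsAcyclic := by
  intro h
  have h01 : (cycleGraph 4).Adj 0 1 := by decide
  have h12 : (cycleGraph 4).Adj 1 2 := by decide
  have h23 : (cycleGraph 4).Adj 2 3 := by decide
  have h30 : (cycleGraph 4).Adj 3 0 := by decide
  let c : (cycleGraph 4).Walk 0 0 :=
    Walk.cons h01 (Walk.cons h12 (Walk.cons h23 (Walk.cons h30 Walk.nil)))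
  exact h c ⟨⟨⟨by simp [c, Walk.edges]⟩, by simp [c]⟩, by simp [c, Walk.support]⟩

lemma isAcyclic_of_embedding {V W : Type*} {G : SimpleGraph V} {H : SimpleGraph W}
    (f : G ↪g H) (h : H.IsAcyclic) : G.IsAcyclic := by
  intro v c hc
  exact h (c.map f.toHom) ((Walk.map_isCycle_iff_of_injective f.injective).mpr hc)

theorem decyclingSet_ge_matchings_mul_of_disjoint_fourCycles
    {V₁ V₂ : Type*} [Fintype V₁] [Fintype V₂]
    (G₁ : SimpleGraph V₁) (G₂ : SimpleGraph V₂)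
    (M₁ : Finset (Sym2 V₁)) (M₂ : Finset (Sym2 V₂))
    (hM₁ : ↑M₁ ⊆ G₁.edgeSet)
    (hM₁' : (M₁ : Set (Sym2 V₁)).Pairwise (fun e f => ∀ v, ¬(v ∈ e ∧ v ∈ f)))
    (hM₂ : ↑M₂ ⊆ G₂.edgeSet)
    (hM₂' : (M₂ : Set (Sym2 V₂)).Pairwise (fun e f => ∀ v, ¬(v ∈ e ∧ v ∈ f))) :
    (∀ S : Finset (V₁ × V₂),
        ((G₁.boxProd G₂).induce ((↑S : Set (V₁ × V₂))ᶜ)).IsAcyclic →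
        M₁.card * M₂.card ≤ S.card) ∧
    (∀ e₁ ∈ M₁, ∀ e₂ ∈ M₂,
        Nonempty (((G₁.boxProd G₂).induce
          {p : V₁ × V₂ | p.1 ∈ e₁ ∧ p.2 ∈ e₂}) ≃g SimpleGraph.cycleGraph 4)) ∧
    (∀ e₁ ∈ M₁, ∀ e₂ ∈ M₂, ∀ f₁ ∈ M₁, ∀ f₂ ∈ M₂, (e₁, e₂) ≠ (f₁, f₂) →
        Disjoint {p : V₁ × V₂ | p.1 ∈ e₁ ∧ p.2 ∈ e₂}
          {p : V₁ × V₂ | p.1 ∈ f₁ ∧ p.2 ∈ f₂}) := by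
  classical
  -- part 2
  have part2 : ∀ e₁ ∈ M₁, ∀ e₂ ∈ M₂,
      Nonempty (((G₁.boxProd G₂).induce
        {p : V₁ × V₂ | p.1 ∈ e₁ ∧ p.2 ∈ e₂}) ≃g SimpleGraph.cycleGraph 4) := by
    intro e₁ he₁ e₂ he₂
    have h1 : e₁ ∈ G₁.edgeSet := hM₁ he₁
    have h2 : e₂ ∈ G₂.edgeSet := hM₂ he₂
    induction e₁ using Sym2.ind with
    | _ a b =>
      induction e₂ using Sym2.ind with
      | _ c d =>
        exact quad_iso G₁ G₂ h1 h2
  -- part 3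
  have part3 : ∀ e₁ ∈ M₁, ∀ e₂ ∈ M₂, ∀ f₁ ∈ M₁, ∀ f₂ ∈ M₂, (e₁, e₂) ≠ (f₁, f₂) →
      Disjoint {p : V₁ × V₂ | p.1 ∈ e₁ ∧ p.2 ∈ e₂}
        {p : V₁ × V₂ | p.1 ∈ f₁ ∧ p.2 ∈ f₂} := by
    intro e₁ he₁ e₂ he₂ f₁ hf₁ f₂ hf₂ hne
    rw [Set.disjoint_left]
    rintro ⟨x, y⟩ ⟨hx1, hy1⟩ ⟨hx2, hy2⟩
    rcases (Prod.mk.injEq .. ▸ fun h => hne h :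
        ¬(e₁ = f₁ ∧ e₂ = f₂)) with h
    by_cases h1 : e₁ = f₁
    · have h2 : e₂ ≠ f₂ := fun h2 => hne (by rw [h1, h2])
      exact hM₂' he₂ hf₂ h2 y ⟨hy1, hy2⟩
    · exact hM₁' he₁ hf₁ h1 x ⟨hx1, hx2⟩
  refine ⟨?_, part2, part3⟩
  intro S hS
  -- every quad meets S
  have key : ∀ p : Sym2 V₁ × Sym2 V₂, p ∈ M₁ ×ˢ M₂ →
      ∃ v : V₁ × V₂, v ∈ S ∧ v.1 ∈ p.1 ∧ v.2 ∈ p.2 := by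
    rintro ⟨e₁, e₂⟩ hp
    rw [Finset.mem_product] at hp
    by_contra hno
    push_neg at hno
    have hsub : {p : V₁ × V₂ | p.1 ∈ e₁ ∧ p.2 ∈ e₂} ⊆ ((↑S : Set (V₁ × V₂))ᶜ) := by
      rintro ⟨x, y⟩ ⟨hx, hy⟩ hmem
      exact (hno (x, y) hmem hx) hy
    obtain ⟨ψ⟩ := part2 e₁ hp.1 e₂ hp.2
    exact cycleGraph_four_not_acyclic
      (isAcyclic_of_embedding (((G₁.boxProd G₂).induceHomOfLE hsub).comp ψ.symm.toEmbedding) hS)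
  rw [← Finset.card_product, ← Finset.card_attach (s := M₁ ×ˢ M₂)]
  apply Finset.card_le_card_of_injOn (fun p => (key p.1 p.2).choose)
  · intro p _
    exact (key p.1 p.2).choose_spec.1
  · rintro ⟨⟨e₁, e₂⟩, hp⟩ _ ⟨⟨f₁, f₂⟩, hq⟩ _ hgeq
    simp only [Subtype.mk.injEq]
    rw [Finset.mem_product] at hp hq
    by_contra hne
    have hd := part3 e₁ hp.1 e₂ hp.2 f₁ hq.1 f₂ hq.2 hne
    have hp' := Finset.mem_product.mpr hp
    have hq' := Finset.mem_product.mpr hq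
    have h1 : (key ((e₁, e₂) : Sym2 V₁ × Sym2 V₂) hp').choose ∈
        {p : V₁ × V₂ | p.1 ∈ e₁ ∧ p.2 ∈ e₂} :=
      ⟨(key _ hp').choose_spec.2.1, (key _ hp').choose_spec.2.2⟩
    have h2 : (key ((e₁, e₂) : Sym2 V₁ × Sym2 V₂) hp').choose ∈
        {p : V₁ × V₂ | p.1 ∈ f₁ ∧ p.2 ∈ f₂} := by
      rw [show (key ((e₁, e₂) : Sym2 V₁ × Sym2 V₂) hp').choose
          = (key ((f₁, f₂) : Sym2 V₁ × Sym2 V₂) hq').choose from hgeq]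
      exact ⟨(key _ hq').choose_spec.2.1, (key _ hq').choose_spec.2.2⟩
    exact Set.disjoint_left.mp hd h1 h2
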